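/- Let G be the graph on {1, …, N} with an edge between i and j iff |‖q_i − q_j‖ − ‖p_i − p_j‖| ≤ 2γ. Then every consensus set of any rigid transformation (R, t) with inlier threshold γ is a clique in G; hence the maximum consensus size over all rigid transformations is at most the clique number of G. -/

import Mathlib

open scoped Matrix

lemma norm_mulVec_orth {R : Matrix (Fin 3) (Fin 3) ℝ}
    (hR : R ∈ Matrix.orthogonalGroup (Fin 3) ℝ) (x : Fin 3 → ℝ) :
    ‖(WithLp.equiv 2 (Fin 3 → ℝ)).symm (R.mulVec x)‖ = ‖(WithLp.equiv 2 (Fin 3 → ℝ)).symm x‖ := by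
  have key : ∀ y : Fin 3 → ℝ, ‖(WithLp.equiv 2 (Fin 3 → ℝ)).symm y‖ ^ 2 = y ⬝ᵥ y := by
    intro y
    rw [EuclideanSpace.norm_eq, Real.sq_sqrt (by positivity)]
    simp [dotProduct, sq, Real.norm_eq_abs, abs_mul_abs_self]
  have hsq : ‖(WithLp.equiv 2 (Fin 3 → ℝ)).symm (R.mulVec x)‖ ^ 2
      = ‖(WithLp.equiv 2 (Fin 3 → ℝ)).symm x‖ ^ 2 := by
    rw [key, key]
    have h1 : Rᵀ * R = 1 := by
      have h := hR.1
      rwa [Matrix.star_eq_conjTranspose, Matrix.conjTranspose_eq_transpose_of_trivial] at h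
    calc (R.mulVec x) ⬝ᵥ (R.mulVec x) = ((R.mulVec x) ᵥ* R) ⬝ᵥ x := by
          rw [Matrix.dotProduct_mulVec]
      _ = (Rᵀ *ᵥ (R *ᵥ x)) ⬝ᵥ x := by rw [← Matrix.mulVec_transpose]
      _ = ((Rᵀ * R) *ᵥ x) ⬝ᵥ x := by rw [Matrix.mulVec_mulVec]
      _ = x ⬝ᵥ x := by rw [h1, Matrix.one_mulVec]
  have hc := congrArg Real.sqrt hsq
  rwa [Real.sqrt_sq (norm_nonneg _), Real.sqrt_sq (norm_nonneg _)] at hc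

theorem stmt_9 (N : ℕ) (p q : Fin N → EuclideanSpace ℝ (Fin 3)) (γ : ℝ)
    (G : SimpleGraph (Fin N))
    (hG : ∀ i j, G.Adj i j ↔ i ≠ j ∧ |‖q i - q j‖ - ‖p i - p j‖| ≤ 2 * γ) :
    ∀ (R : Matrix (Fin 3) (Fin 3) ℝ),
      R ∈ Matrix.orthogonalGroup (Fin 3) ℝ → R.det = 1 →
      ∀ (t : EuclideanSpace ℝ (Fin 3)) (I : Finset (Fin N)),
        (∀ i ∈ I, ‖((WithLp.equiv 2 (Fin 3 → ℝ)).symm (R.mulVec (p i))) + t - q i‖ ≤ γ) →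
        G.IsClique ↑I ∧ I.card ≤ G.cliqueNum := by
  intro R hR _hdet t I hI
  set f : Fin N → EuclideanSpace ℝ (Fin 3) :=
    fun i => ((WithLp.equiv 2 (Fin 3 → ℝ)).symm (R.mulVec (p i))) + t with hf
  have hdist : ∀ i j, ‖f i - f j‖ = ‖p i - p j‖ := by
    intro i j
    have : f i - f j = (WithLp.equiv 2 (Fin 3 → ℝ)).symm
        (R.mulVec (WithLp.equiv 2 (Fin 3 → ℝ) (p i - p j))) := by
      simp only [hf]
      rw [WithLp.equiv_apply, WithLp.equiv_symm_apply, WithLp.ofLp_sub, Matrix.mulVec_sub, WithLp.toLp_sub]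
      abel
    rw [this, norm_mulVec_orth hR]
    simp
  have hclique : G.IsClique ↑I := by
    intro i hi j hj hij
    rw [hG]
    refine ⟨hij, ?_⟩
    have h1 : ‖f i - q i‖ ≤ γ := hI i hi
    have h2 : ‖f j - q j‖ ≤ γ := hI j hj
    rw [← hdist i j]
    calc |‖q i - q j‖ - ‖f i - f j‖| ≤ ‖(q i - q j) - (f i - f j)‖ :=
          abs_norm_sub_norm_le _ _
      _ = ‖-(f i - q i) + (f j - q j)‖ := by congr 1; abel
      _ ≤ ‖-(f i - q i)‖ + ‖f j - q j‖ := norm_add_le _ _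
      _ = ‖f i - q i‖ + ‖f j - q j‖ := by rw [norm_neg]
      _ ≤ γ + γ := add_le_add h1 h2
      _ = 2 * γ := by ring
  exact ⟨hclique, hclique.card_le_cliqueNum⟩
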